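/- Let $\mathcal{X}$ be a space, $\mu$ a measure, $f, g$ probability densities, $r : \mathcal{X} \to (0,\infty)$, and $n, m$ positive integers. Define $h(n,f,m,g,r) = \frac{nf + mg}{n + \lambda_0 m r}$ where $\lambda_0 > 0$ is the unique constant making $h$ a density, and define $\psi(n,f,m,g,r) = \frac{n+m}{m}(f - h(n,f,m,g,r))$. Then $\psi(n,f,m,g,r) = -\psi(m,g,n,f,1/r)$, i.e.\ $\psi$ changes sign under swapping the roles of the two samples and taking the reciprocal of $r$. -/

import Mathlib

open MeasureTheory

theorem stmt3 {X : Type*} [MeasurableSpace X] (μ : Measure X)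
    (f g r : X → ℝ) (n m : ℕ) (hn : 0 < n) (hm : 0 < m)
    (hf0 : ∀ x, 0 ≤ f x) (hg0 : ∀ x, 0 ≤ g x) (hr0 : ∀ x, 0 < r x)
    (hfint : Integrable f μ) (hgint : Integrable g μ)
    (hf1 : ∫ x, f x ∂μ = 1) (hg1 : ∫ x, g x ∂μ = 1)
    (hrf : Integrable (fun x => r x * f x) μ)
    (hgr : Integrable (fun x => g x / r x) μ)
    (lam0 : ℝ) (hlam0 : 0 < lam0)
    (hnorm : ∫ x, ((n : ℝ) * f x + m * g x) / (n + lam0 * m * r x) ∂μ = 1)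
    (theta0 : ℝ) (htheta0 : 0 < theta0)
    (hnorm' : ∫ x, ((m : ℝ) * g x + n * f x) / (m + theta0 * n * (r x)⁻¹) ∂μ = 1)
    (huniq : ∀ θ : ℝ, 0 < θ →
      (∫ x, ((m : ℝ) * g x + n * f x) / (m + θ * n * (r x)⁻¹) ∂μ = 1) → θ = theta0) :
    ∀ x, ((n : ℝ) + m) / m
        * (f x - ((n : ℝ) * f x + m * g x) / (n + lam0 * m * r x))
      = - (((m : ℝ) + n) / n
        * (g x - ((m : ℝ) * g x + n * f x) / (m + theta0 * n * (r x)⁻¹))) := by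
  have hn' : (0:ℝ) < n := by exact_mod_cast hn
  have hm' : (0:ℝ) < m := by exact_mod_cast hm
  have hD : ∀ x, (0:ℝ) < n + lam0 * m * r x := by
    intro x
    have := hr0 x
    positivity
  have hqint : Integrable (fun x => ((n:ℝ) * f x + m * g x) / (n + lam0 * m * r x)) μ := by
    by_contra h
    rw [integral_undef h] at hnorm
    norm_num at hnorm
  have hfg : Integrable (fun x => (n:ℝ) * f x + m * g x) μ :=
    (hfint.const_mul _).add (hgint.const_mul _)
  have hkey : (fun x => lam0 * m * r x * (((n:ℝ) * f x + m * g x) / (n + lam0 * m * r x)))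
      = fun x => ((n:ℝ) * f x + m * g x)
        - n * (((n:ℝ) * f x + m * g x) / (n + lam0 * m * r x)) := by
    funext x
    have hDx := (hD x).ne'
    field_simp
    ring
  have hint2 : Integrable
      (fun x => lam0 * m * r x * (((n:ℝ) * f x + m * g x) / (n + lam0 * m * r x))) μ := by
    rw [hkey]
    exact hfg.sub (hqint.const_mul _)
  have hival : ∫ x, lam0 * m * r x * (((n:ℝ) * f x + m * g x) / (n + lam0 * m * r x)) ∂μ
      = m := by
    rw [hkey, integral_sub hfg (hqint.const_mul _), integral_add (hfint.const_mul _)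
      (hgint.const_mul _), integral_const_mul, integral_const_mul, integral_const_mul,
      hf1, hg1, hnorm]
    ring
  have htarget : ∫ x, ((m : ℝ) * g x + n * f x) / (m + lam0⁻¹ * n * (r x)⁻¹) ∂μ = 1 := by
    have heq : (fun x => ((m : ℝ) * g x + n * f x) / (m + lam0⁻¹ * n * (r x)⁻¹))
        = fun x => (1/m) * (lam0 * m * r x * (((n:ℝ) * f x + m * g x) / (n + lam0 * m * r x))) := by
      funext x
      have hrx := (hr0 x).ne'
      have hDx := (hD x).ne'
      have hl := hlam0.ne'
      have hrx0 := hr0 x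
      have hden : (m:ℝ) + lam0⁻¹ * n * (r x)⁻¹ = ((n:ℝ) + lam0 * m * r x) / (lam0 * r x) := by
        field_simp
        ring
      rw [hden, div_div_eq_mul_div, div_eq_iff (hD x).ne']
      field_simp
      ring
    rw [heq, integral_const_mul, hival]
    field_simp
  have hth : lam0⁻¹ = theta0 := huniq lam0⁻¹ (inv_pos.2 hlam0) htarget
  intro x
  rw [← hth]
  have hrx := (hr0 x).ne'
  have hDx := (hD x).ne'
  have hl := hlam0.ne'
  have hD2 : (m:ℝ) + lam0⁻¹ * n * (r x)⁻¹ ≠ 0 := by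
    have := hr0 x
    have : (0:ℝ) < m + lam0⁻¹ * n * (r x)⁻¹ := by positivity
    exact this.ne'
  have hden : (m:ℝ) + lam0⁻¹ * n * (r x)⁻¹ = ((n:ℝ) + lam0 * m * r x) / (lam0 * r x) := by
    field_simp
    ring
  rw [hden, div_div_eq_mul_div]
  have hDx' : (n:ℝ) + m * lam0 * r x ≠ 0 := by rw [mul_comm (m:ℝ) lam0]; exact hDx
  field_simp
  ring
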